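/- Let τ ∈ ℒ, δ ∈ (0, m_τ), and let {z_k} be a (δ,τ)-lattice (so {D_{3δ}(z_k)} covers 𝔻 with finite multiplicity N). Then for any z ∈ 𝔻 and j ≥ 0, ∑_{z_k ∈ R_j(z)} τ(z_k)² ≲ 2^{2j} τ(z)², where R_j(z) = {ξ ∈ 𝔻 : 2^j δτ(z) < |z−ξ| ≤ 2^{j+1}δτ(z)}, with implicit constant independent of z and j. -/

import Mathlib

open Complex Metric MeasureTheory
open scoped ENNReal

/-- For a `(δ,τ)`-lattice `{z_k}`, one has `∑_{z_k ∈ R_j(z)} τ(z_k)² ≲ 2^{2j} τ(z)²`,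
where `R_j(z) = {ξ ∈ 𝔻 : 2^j δ τ(z) < |z-ξ| ≤ 2^{j+1} δ τ(z)}`. -/
theorem stmt12 (τ : ℂ → ℝ) (c₁ c₂ : ℝ) (hc₁ : 0 < c₁) (hc₂ : 0 < c₂)
    (hτpos : ∀ z ∈ ball (0:ℂ) 1, 0 < τ z)
    (h1 : ∀ z ∈ ball (0:ℂ) 1, τ z ≤ c₁ * (1 - ‖z‖))
    (h2 : ∀ z ∈ ball (0:ℂ) 1, ∀ ζ ∈ ball (0:ℂ) 1,
      |τ z - τ ζ| ≤ c₂ * ‖z - ζ‖)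
    (δ : ℝ) (hδ0 : 0 < δ) (hδ : δ < min 1 (min c₁⁻¹ c₂⁻¹) / 4)
    (z : ℕ → ℂ) (hzmem : ∀ k, z k ∈ ball (0:ℂ) 1)
    (hsep : ∀ n k, n ≠ k → δ * τ (z k) ≤ ‖z n - z k‖)
    (hcover : ∀ w ∈ ball (0:ℂ) 1, ∃ k, ‖w - z k‖ < δ * τ (z k))
    (N : ℕ) (hN : 0 < N)
    (hmult : ∀ w ∈ ball (0:ℂ) 1,
      (∑' k, Set.indicator (ball (z k) (3 * δ * τ (z k))) (fun _ => (1:ℝ≥0∞)) w) ≤ N) :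
    ∃ C : ℝ, 0 < C ∧ ∀ w ∈ ball (0:ℂ) 1, ∀ j : ℕ,
      (∑' k, Set.indicator
          {k' : ℕ | 2 ^ j * δ * τ w < ‖w - z k'‖ ∧
            ‖w - z k'‖ ≤ 2 ^ (j+1) * δ * τ w}
          (fun k' => ENNReal.ofReal (τ (z k') ^ 2)) k) ≤
        ENNReal.ofReal (C * 2 ^ (2*j) * τ w ^ 2) := by
  classical
  have hδc₁ : δ * c₁ < 1 / 4 := by
    have h' : δ < c₁⁻¹ / 4 :=
      lt_of_lt_of_le hδ (by gcongr; exact le_trans (min_le_right _ _) (min_le_left _ _))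
    calc δ * c₁ < c₁⁻¹ / 4 * c₁ := by gcongr
      _ = 1 / 4 := by field_simp
  have hδc₂ : δ * c₂ < 1 / 4 := by
    have h' : δ < c₂⁻¹ / 4 :=
      lt_of_lt_of_le hδ (by gcongr; exact le_trans (min_le_right _ _) (min_le_right _ _))
    calc δ * c₂ < c₂⁻¹ / 4 * c₂ := by gcongr
      _ = 1 / 4 := by field_simp
  have hτk : ∀ k, 0 < τ (z k) := fun k => hτpos _ (hzmem k)
  -- the `3δ`-balls are contained in the unit disc
  have hball3 : ∀ k, ball (z k) (3 * δ * τ (z k)) ⊆ ball (0:ℂ) 1 := by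
    intro k x hx
    have hx' : ‖x - z k‖ < 3 * δ * τ (z k) := by
      simpa [Complex.dist_eq] using hx
    have hzk : ‖z k‖ < 1 := by simpa using hzmem k
    have hτ1 : τ (z k) ≤ c₁ * (1 - ‖z k‖) := h1 _ (hzmem k)
    have hxle : ‖x‖ ≤ ‖x - z k‖ + ‖z k‖ := by
      simpa using norm_add_le (x - z k) (z k)
    have h1z : 0 < 1 - ‖z k‖ := by linarith
    have h3 : 3 * δ * τ (z k) ≤ 3 * δ * (c₁ * (1 - ‖z k‖)) := by
      have : 0 ≤ 3 * δ := by linarith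
      gcongr
    simp only [mem_ball, dist_zero_right]
    nlinarith [hτk k]
  refine ⟨16 * N, by positivity, ?_⟩
  intro w hw j
  set v : ℝ≥0∞ := volume (ball (0:ℂ) 1) with hv
  have hv0 : v ≠ 0 := (measure_ball_pos _ _ one_pos).ne'
  have hvt : v ≠ ⊤ := measure_ball_lt_top.ne
  have hτw : 0 < τ w := hτpos w hw
  have h2j : (1:ℝ) ≤ 2 ^ j := one_le_pow₀ one_le_two
  set A : Set ℕ := {k' : ℕ | 2 ^ j * δ * τ w < ‖w - z k'‖ ∧
      ‖w - z k'‖ ≤ 2 ^ (j+1) * δ * τ w} with hA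
  -- for lattice points in the annulus, τ (z k) ≤ 2^(j+1) τ w
  have hτbound : ∀ k ∈ A, τ (z k) ≤ 2 ^ (j+1) * τ w := by
    intro k hk
    have hub : ‖w - z k‖ ≤ 2 ^ (j+1) * δ * τ w := hk.2
    have hlip : |τ w - τ (z k)| ≤ c₂ * ‖w - z k‖ := h2 w hw _ (hzmem k)
    have h' : τ (z k) - τ w ≤ c₂ * ‖w - z k‖ := by
      have := abs_le.1 hlip
      linarith [this.1]
    have hc2' : c₂ * ‖w - z k‖ ≤ c₂ * (2 ^ (j+1) * δ * τ w) := by gcongr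
    have hpow : (2:ℝ) ^ (j+1) = 2 * 2 ^ j := by ring
    have hkey : c₂ * (2 ^ (j+1) * δ * τ w) ≤ 2 ^ j * τ w := by
      rw [hpow]
      have h0 : 0 ≤ (1/4 - δ * c₂) * (2 ^ j * τ w) :=
        mul_nonneg (by linarith) (by positivity)
      nlinarith
    have h1' : 1 * τ w ≤ 2 ^ j * τ w := mul_le_mul_of_nonneg_right h2j hτw.le
    rw [hpow]
    linarith
  set R : ℝ := 4 * 2 ^ j * δ * τ w with hR
  have hR0 : 0 ≤ R := by positivity
  -- the δ-balls around annulus points sit inside `ball w R`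
  have hsub : ∀ k ∈ A, ball (z k) (δ * τ (z k)) ⊆ ball w R := by
    intro k hk x hx
    have hx' : ‖x - z k‖ < δ * τ (z k) := by simpa [Complex.dist_eq] using hx
    have h3 : δ * τ (z k) ≤ δ * (2 ^ (j+1) * τ w) := by
      have := hτbound k hk; gcongr
    have htri : ‖x - w‖ ≤ ‖x - z k‖ + ‖z k - w‖ := by
      simpa using norm_add_le (x - z k) (z k - w)
    have hkw : ‖z k - w‖ ≤ 2 ^ (j+1) * δ * τ w := by
      rw [show z k - w = -(w - z k) by ring, norm_neg]; exact hk.2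
    have hpow : (2:ℝ) ^ (j+1) = 2 * 2 ^ j := by ring
    simp only [mem_ball, Complex.dist_eq]
    rw [hR]
    nlinarith
  set S : Set ℂ := ball w R ∩ ball (0:ℂ) 1 with hS
  have hSmeas : MeasurableSet S := measurableSet_ball.inter measurableSet_ball
  set c : ℝ≥0∞ := ENNReal.ofReal (δ ^ 2) * v with hc
  have hc0 : c ≠ 0 := by
    have hδ2 : (0:ℝ) < δ ^ 2 := by positivity
    rw [hc]
    exact mul_ne_zero (by simp [ENNReal.ofReal_eq_zero, not_le, hδ2, hδ0.ne']) hv0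
  have hct : c ≠ ⊤ := ENNReal.mul_ne_top ENNReal.ofReal_ne_top hvt
  -- individual term bound
  have key : ∀ k, Set.indicator A (fun k' => ENNReal.ofReal (τ (z k') ^ 2)) k * c ≤
      ∫⁻ x in S, Set.indicator (ball (z k) (3 * δ * τ (z k))) (1 : ℂ → ℝ≥0∞) x := by
    intro k
    by_cases hk : k ∈ A
    · rw [Set.indicator_of_mem hk]
      have hvol : volume (ball (z k) (δ * τ (z k))) = ENNReal.ofReal ((δ * τ (z k)) ^ 2) * v := by
        rw [MeasureTheory.Measure.addHaar_ball volume (z k) (mul_nonneg hδ0.le (hτk k).le),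
          Complex.finrank_real_complex]
      have heq : ENNReal.ofReal (τ (z k) ^ 2) * c = volume (ball (z k) (δ * τ (z k))) := by
        rw [hvol, hc, ← mul_assoc, ← ENNReal.ofReal_mul (by positivity)]
        congr 2
        ring
      rw [heq]
      have hsub2 : ball (z k) (δ * τ (z k)) ⊆ ball (z k) (3 * δ * τ (z k)) ∩ S := by
        intro x hx
        refine ⟨ball_subset_ball (by nlinarith [hτk k]) hx, hsub k hk hx, ?_⟩
        exact hball3 k (ball_subset_ball (by nlinarith [hτk k]) hx)
      calc volume (ball (z k) (δ * τ (z k)))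
          ≤ volume (ball (z k) (3 * δ * τ (z k)) ∩ S) := measure_mono hsub2
        _ = ∫⁻ x in S, Set.indicator (ball (z k) (3 * δ * τ (z k))) (1 : ℂ → ℝ≥0∞) x := by
            rw [MeasureTheory.lintegral_indicator_one measurableSet_ball,
              MeasureTheory.Measure.restrict_apply measurableSet_ball]
    · rw [Set.indicator_of_notMem hk, zero_mul]
      exact zero_le
  -- sum the bound and swap sum and integral
  have hsum : (∑' k, Set.indicator A (fun k' => ENNReal.ofReal (τ (z k') ^ 2)) k) * c ≤
      (N : ℝ≥0∞) * volume S := by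
    rw [← ENNReal.tsum_mul_right]
    calc (∑' k, Set.indicator A (fun k' => ENNReal.ofReal (τ (z k') ^ 2)) k * c)
        ≤ ∑' k, ∫⁻ x in S,
            Set.indicator (ball (z k) (3 * δ * τ (z k))) (1 : ℂ → ℝ≥0∞) x :=
          ENNReal.tsum_le_tsum key
      _ = ∫⁻ x in S, ∑' k,
            Set.indicator (ball (z k) (3 * δ * τ (z k))) (1 : ℂ → ℝ≥0∞) x := by
          rw [MeasureTheory.lintegral_tsum]
          intro k
          exact (measurable_const.indicator measurableSet_ball).aemeasurable
      _ ≤ ∫⁻ _ in S, (N : ℝ≥0∞) := by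
          refine MeasureTheory.setLIntegral_mono measurable_const ?_
          intro x hx
          exact hmult x hx.2
      _ = (N : ℝ≥0∞) * volume S := MeasureTheory.setLIntegral_const S _
  -- estimate volume S
  have hvolS : volume S ≤ ENNReal.ofReal (R ^ 2) * v := by
    calc volume S ≤ volume (ball w R) := measure_mono Set.inter_subset_left
      _ = ENNReal.ofReal (R ^ 2) * v := by
          rw [MeasureTheory.Measure.addHaar_ball volume w hR0, Complex.finrank_real_complex]
  have hfinal : (∑' k, Set.indicator A (fun k' => ENNReal.ofReal (τ (z k') ^ 2)) k) * c ≤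
      ENNReal.ofReal (16 * N * 2 ^ (2*j) * τ w ^ 2) * c := by
    refine hsum.trans ?_
    have h2sq : (2:ℝ) ^ (2*j) = (2 ^ j) ^ 2 := by rw [two_mul, pow_add]; ring
    have hRsq : (N : ℝ) * R ^ 2 = 16 * N * 2 ^ (2*j) * τ w ^ 2 * δ ^ 2 := by
      rw [hR, h2sq]; ring
    calc (N : ℝ≥0∞) * volume S ≤ (N : ℝ≥0∞) * (ENNReal.ofReal (R ^ 2) * v) := by gcongr
      _ = ENNReal.ofReal ((N : ℝ) * R ^ 2) * v := by
          rw [← ENNReal.ofReal_natCast N, ← mul_assoc,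
            ← ENNReal.ofReal_mul (Nat.cast_nonneg N)]
      _ = ENNReal.ofReal (16 * N * 2 ^ (2*j) * τ w ^ 2) * c := by
          rw [hRsq, hc, ENNReal.ofReal_mul (by positivity), mul_assoc]
  exact (ENNReal.mul_le_mul_iff_left hc0 hct).1 hfinal
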